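/- Let G be a finite group, N a normal abelian subgroup of G of odd order, such that every Cayley graph Cay(G,S) with |S| ≤ k is integral. Then every Cayley graph over G/N with connection set of size at most k is integral. -/

import Mathlib

/-- The Cayley graph of a group `G` with connection set `S`. For a symmetric set `S`
with `1 ∉ S`, `g` and `h` are adjacent iff `h * g⁻¹ ∈ S`. -/
def cayley {G : Type*} [Group G] (S : Set G) : SimpleGraph G :=
  SimpleGraph.fromRel (fun g h => h * g⁻¹ ∈ S)

/-- A finite graph is integral if all eigenvalues of its adjacency matrix are integers. -/
def IsIntegralGraph {V : Type*} [Finite V] (Γ : SimpleGraph V) : Prop :=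
  letI := Fintype.ofFinite V
  letI := Classical.decEq V
  letI : DecidableRel Γ.Adj := Classical.decRel _
  ∀ μ ∈ spectrum ℝ (Γ.adjMatrix ℝ), ∃ z : ℤ, (z : ℝ) = μ

/-- `μ` is an eigenvalue of the adjacency matrix of the finite graph `Γ`. -/
def IsAdjEigenvalue {V : Type*} [Finite V] (Γ : SimpleGraph V) (μ : ℝ) : Prop :=
  letI := Fintype.ofFinite V
  letI := Classical.decEq V
  letI : DecidableRel Γ.Adj := Classical.decRel _
  μ ∈ spectrum ℝ (Γ.adjMatrix ℝ)

/-- Any involution in `G ⧸ N`, for `N` of odd order, lifts to an involution of `G`. -/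
lemma exists_invol_lift {G : Type*} [Group G] (N : Subgroup G) [N.Normal]
    (hodd : Odd (Nat.card N)) (x : G ⧸ N) (hx : x * x = 1) :
    ∃ t : G, (t : G ⧸ N) = x ∧ t * t = 1 := by
  obtain ⟨g, rfl⟩ := QuotientGroup.mk_surjective x
  have hg2 : g * g ∈ N := by
    rw [← QuotientGroup.eq_one_iff, QuotientGroup.mk_mul, hx]
  obtain ⟨j, hj⟩ := hodd
  have hcomm : Commute g ((g * g) ^ j) := (Commute.refl g).mul_right (Commute.refl g) |>.pow_right j
  have hN : (g * g) ^ Nat.card N = 1 := by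
    have h1 := pow_card_eq_one' (G := N) (x := ⟨g * g, hg2⟩)
    exact congrArg Subtype.val h1
  refine ⟨g * (g * g) ^ j, ?_, ?_⟩
  · have : ((g*g)^j : G) ∈ N := N.pow_mem hg2 j
    rw [QuotientGroup.mk_mul, (QuotientGroup.eq_one_iff _).2 this, mul_one]
  · have key : g * (g*g)^j * (g * (g*g)^j) = (g*g)^(2*j+1) := by
      rw [two_mul, add_comm, pow_add, pow_add, pow_one]
      rw [mul_assoc g ((g*g)^j), ← mul_assoc ((g*g)^j) g, ← hcomm.eq]
      group
    rw [key, ← hj, hN]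

/-- There is a section of `G → G ⧸ N` commuting with inverses, for `N` of odd order. -/
lemma exists_symm_section {G : Type*} [Group G] (N : Subgroup G) [N.Normal]
    (hodd : Odd (Nat.card N)) :
    ∃ L : G ⧸ N → G, (∀ x, ((L x : G) : G ⧸ N) = x) ∧ (∀ x, L x⁻¹ = (L x)⁻¹) := by
  classical
  letI : LinearOrder (G ⧸ N) := @linearOrderOfSTO _ WellOrderingRel
    ⟨⟩ (Classical.decRel _)
  choose il hil1 hil2 using exists_invol_lift N hodd
  set L : G ⧸ N → G := fun x =>
    if h1 : x = 1 then 1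
    else if h2 : x * x = 1 then il x h2
    else if x ≤ x⁻¹ then x.out else (x⁻¹).out⁻¹ with hL
  have hsec : ∀ x, ((L x : G) : G ⧸ N) = x := by
    intro x
    by_cases h1 : x = 1
    · simp [hL, h1]
    by_cases h2 : x * x = 1
    · simp [hL, h1, h2, hil1]
    by_cases h3 : x ≤ x⁻¹
    · simp [hL, h1, h2, h3, QuotientGroup.out_eq']
    · simp [hL, h1, h2, h3, QuotientGroup.out_eq']
  refine ⟨L, hsec, ?_⟩
  intro x
  by_cases h1 : x = 1
  · simp [hL, h1]
  have h1' : x⁻¹ ≠ 1 := fun h => h1 (by simpa using congrArg (·⁻¹) h)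
  by_cases h2 : x * x = 1
  · have hxx : x⁻¹ = x := by
      rw [inv_eq_iff_mul_eq_one, h2]
    have ht := hil2 x h2
    have : il x h2 = (il x h2)⁻¹ := by
      rw [eq_inv_iff_mul_eq_one, ht]
    simp only [hL, hxx, dif_neg h1, dif_pos h2]
    exact this
  · have h2' : ¬ (x⁻¹ * x⁻¹ = 1) := by
      intro h
      apply h2
      have := congrArg (·⁻¹) h
      simpa [mul_inv_rev] using this
    have hne : x ≠ x⁻¹ := by
      intro h
      apply h2
      nth_rewrite 2 [h]
      exact mul_inv_cancel x
    by_cases h3 : x ≤ x⁻¹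
    · have h3' : ¬ (x⁻¹ ≤ x) := fun h => hne (le_antisymm h3 h)
      simp only [hL, dif_neg h1, dif_neg h2, if_pos h3, dif_neg h1', dif_neg h2', inv_inv]
      rw [if_neg h3']
    · have h3' : x⁻¹ ≤ x := le_of_not_ge h3
      simp only [hL, dif_neg h1, dif_neg h2, if_neg h3, dif_neg h1', dif_neg h2', inv_inv]
      rw [if_pos h3']

/-- Neighbours in a Cayley graph of a symmetric connection set not containing `1`. -/
lemma cayley_neighborFinset {G : Type*} [Group G] [Fintype G] [DecidableEq G]
    (T : Finset G) (h1 : (1:G) ∉ T) (hinv : ∀ t ∈ T, t⁻¹ ∈ T) (g : G)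
    [DecidableRel (cayley (T : Set G)).Adj] :
    (cayley (T : Set G)).neighborFinset g = T.image (· * g) := by
  ext h
  rw [SimpleGraph.mem_neighborFinset]
  constructor
  · rintro hadj
    rw [cayley, SimpleGraph.fromRel_adj] at hadj
    obtain ⟨hne, hc | hc⟩ := hadj
    · exact Finset.mem_image.2 ⟨h * g⁻¹, by simpa using hc, by group⟩
    · have : (g * h⁻¹)⁻¹ ∈ T := hinv _ (by simpa using hc)
      exact Finset.mem_image.2 ⟨(g * h⁻¹)⁻¹, this, by group⟩
  · rintro hmem
    obtain ⟨t, ht, rfl⟩ := Finset.mem_image.1 hmem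
    rw [cayley, SimpleGraph.fromRel_adj]
    refine ⟨?_, Or.inl (by simpa using ht)⟩
    intro hgt
    apply h1
    have : t = 1 := by
      have := hgt.symm
      rwa [mul_eq_right] at this
    rwa [← this]

/-- Spectrum membership for a real matrix is equivalent to having an eigenvector. -/
lemma mem_spectrum_iff_exists_eigvec {n : Type*} [Fintype n] [DecidableEq n]
    (M : Matrix n n ℝ) (μ : ℝ) :
    μ ∈ spectrum ℝ M ↔ ∃ v : n → ℝ, v ≠ 0 ∧ M.mulVec v = μ • v := by
  rw [spectrum.mem_iff, Matrix.isUnit_iff_isUnit_det, isUnit_iff_ne_zero, not_ne_iff,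
    ← Matrix.exists_mulVec_eq_zero_iff]
  have halg : ∀ v : n → ℝ, ((algebraMap ℝ (Matrix n n ℝ)) μ).mulVec v = μ • v := by
    intro v
    rw [Algebra.algebraMap_eq_smul_one, Matrix.smul_mulVec, Matrix.one_mulVec]
  constructor <;> rintro ⟨v, hv, hveq⟩ <;> refine ⟨v, hv, ?_⟩
  · rw [Matrix.sub_mulVec, halg, sub_eq_zero] at hveq
    exact hveq.symm
  · rw [Matrix.sub_mulVec, halg, sub_eq_zero, hveq]

theorem quotient_by_odd_abelian_normal (G : Type*) [Group G] [Finite G] (k : ℕ)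
    (hG : ∀ S : Finset G, (1 : G) ∉ S → (∀ s ∈ S, s⁻¹ ∈ S) → S.card ≤ k →
      IsIntegralGraph (cayley (S : Set G)))
    (N : Subgroup G) [N.Normal]
    (hab : ∀ a b : G, a ∈ N → b ∈ N → a * b = b * a)
    (hodd : Odd (Nat.card N)) :
    ∀ S : Finset (G ⧸ N), (1 : G ⧸ N) ∉ S → (∀ s ∈ S, s⁻¹ ∈ S) → S.card ≤ k →
      IsIntegralGraph (cayley (S : Set (G ⧸ N))) := by
  intro S hS1 hSinv hSk
  letI : Fintype (G ⧸ N) := Fintype.ofFinite _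
  letI : DecidableEq (G ⧸ N) := Classical.decEq _
  letI : DecidableRel (cayley (S : Set (G ⧸ N))).Adj := Classical.decRel _
  letI : Fintype G := Fintype.ofFinite G
  letI : DecidableEq G := Classical.decEq G
  obtain ⟨L, hLsec, hLinv⟩ := exists_symm_section N hodd
  have hLi : Function.Injective L := fun a b h => by rw [← hLsec a, ← hLsec b, h]
  set T : Finset G := S.image L with hTdef
  have hT1 : (1 : G) ∉ T := by
    simp only [hTdef, Finset.mem_image, not_exists]
    rintro s ⟨hs, h⟩
    apply hS1
    have : s = 1 := by rw [← hLsec s, h]; simp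
    rwa [← this]
  have hTinv : ∀ t ∈ T, t⁻¹ ∈ T := by
    intro t ht
    simp only [hTdef, Finset.mem_image] at ht ⊢
    obtain ⟨s, hs, rfl⟩ := ht
    exact ⟨s⁻¹, hSinv s hs, hLinv s⟩
  letI : DecidableRel (cayley (T : Set G)).Adj := Classical.decRel _
  have hTk : T.card ≤ k := le_trans Finset.card_image_le hSk
  have hInt := hG T hT1 hTinv hTk
  unfold IsIntegralGraph at hInt ⊢
  intro μ hμ
  apply hInt μ
  rw [mem_spectrum_iff_exists_eigvec] at hμ ⊢
  obtain ⟨v, hv0, hveq⟩ := hμ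
  refine ⟨fun g : G => v (g : G ⧸ N), ?_, ?_⟩
  · intro h
    apply hv0
    funext x
    obtain ⟨g, rfl⟩ := QuotientGroup.mk_surjective x
    exact congrFun h g
  · funext g
    rw [SimpleGraph.adjMatrix_mulVec_apply, cayley_neighborFinset T hT1 hTinv g]
    have h1 : ∑ h ∈ T.image (· * g), v ((h : G ⧸ N)) = ∑ t ∈ T, v ((t * g : G) : G ⧸ N) :=
      Finset.sum_image (fun a _ b _ h => mul_right_cancel h)
    have h2 : ∑ t ∈ T, v ((t * g : G) : G ⧸ N) = ∑ s ∈ S, v (s * (g : G ⧸ N)) := by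
      rw [hTdef, Finset.sum_image (fun a _ b _ h => hLi h)]
      refine Finset.sum_congr rfl fun s _ => ?_
      rw [QuotientGroup.mk_mul, hLsec s]
    have h3 : (SimpleGraph.adjMatrix ℝ (cayley (S : Set (G ⧸ N)))).mulVec v (g : G ⧸ N)
        = ∑ s ∈ S, v (s * (g : G ⧸ N)) := by
      rw [SimpleGraph.adjMatrix_mulVec_apply, cayley_neighborFinset S hS1 hSinv ((g : G ⧸ N))]
      rw [Finset.sum_image (fun a _ b _ h => mul_right_cancel h)]
    rw [h1, h2, ← h3, hveq]
    rfl
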